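/- If q divides p−1 and λ is a generator of the Sylow q-subgroup of F^× where |F| = p^q, then λ^{(p^q−1)/(p−1)} ≠ 1 and has order (p−1)_q, the q-part of p−1. -/

import Mathlib

/-- If `q` divides `p - 1` and `λ` is a generator of the Sylow `q`-subgroup of `Fˣ`
where `|F| = p^q`, then `λ^((p^q-1)/(p-1)) ≠ 1` and has order `(p-1)_q`, the
`q`-part of `p - 1`. -/
theorem pow_geom_sum_order (p q : ℕ) (hp : p.Prime) (hq : q.Prime) (hq_odd : Odd q)
    (hdvd : q ∣ p - 1)
    (F : Type*) [Field F] [Fintype F] (hF : Fintype.card F = p ^ q)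
    (lam : Fˣ) (hlam : orderOf lam = q ^ ((p ^ q - 1).factorization q)) :
    lam ^ ((p ^ q - 1) / (p - 1)) ≠ 1 ∧
      orderOf (lam ^ ((p ^ q - 1) / (p - 1))) = q ^ ((p - 1).factorization q) := by
  haveI : Fact q.Prime := ⟨hq⟩
  have hq1 : 1 < q := hq.one_lt
  have hp1 : 1 < p := hp.one_lt
  have hpm1 : p - 1 ≠ 0 := by omega
  have hqp : ¬ q ∣ p := by
    intro h
    have h1 : q ∣ p - (p - 1) := Nat.dvd_sub h hdvd
    have : p - (p - 1) = 1 := by omega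
    rw [this] at h1
    have := Nat.le_of_dvd one_pos h1
    omega
  -- valuation of p^q - 1
  have hlt : (1 : ℕ) < p ^ q := Nat.one_lt_pow (by omega : q ≠ 0) hp1
  have hne : p ^ q - 1 ≠ 0 := by omega
  have hv : (p ^ q - 1).factorization q = (p - 1).factorization q + 1 := by
    have := padicValNat.pow_sub_pow (p := q) hq_odd (x := p) (y := 1) hp1
      (by simpa using hdvd) hqp (n := q) hq.ne_zero
    simp only [one_pow] at this
    rw [Nat.factorization_def _ hq, Nat.factorization_def _ hq, this,
      padicValNat.self hq1]
  set v : ℕ := (p - 1).factorization q with hvdef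
  set m : ℕ := (p ^ q - 1) / (p - 1) with hmdef
  have hdvd' : p - 1 ∣ p ^ q - 1 := by
    simpa using Nat.sub_dvd_pow_sub_pow p 1 q
  have hmne : m ≠ 0 := Nat.div_ne_zero_iff.2 ⟨hpm1, Nat.le_of_dvd (by omega) hdvd'⟩
  have hmfact : m.factorization q = 1 := by
    rw [hmdef, Nat.factorization_div hdvd']
    simp [hv]
    omega
  -- gcd computation
  have hqm : q ∣ m := Nat.dvd_of_factorization_pos (by rw [hmfact]; exact one_ne_zero)
  have hgcd : Nat.gcd (q ^ (v + 1)) m = q := by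
    obtain ⟨i, hile, hi⟩ := (Nat.dvd_prime_pow hq).1 (Nat.gcd_dvd_left (q ^ (v + 1)) m)
    have hdm : q ^ i ∣ m := hi ▸ Nat.gcd_dvd_right _ _
    have hi1 : i ≤ 1 := by
      have := (Nat.Prime.pow_dvd_iff_le_factorization hq hmne).1 hdm
      omega
    have hqg : q ∣ Nat.gcd (q ^ (v + 1)) m :=
      Nat.dvd_gcd (dvd_pow_self q (Nat.succ_ne_zero v)) hqm
    have hi0 : i ≠ 0 := by
      rintro rfl
      rw [hi, pow_zero] at hqg
      have := Nat.le_of_dvd one_pos hqg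
      omega
    have : i = 1 := by omega
    rw [hi, this, pow_one]
  have horder : orderOf (lam ^ m) = q ^ v := by
    rw [orderOf_pow, hlam, hv, hgcd, pow_succ, Nat.mul_div_cancel _ (by omega : 0 < q)]
  have hvpos : 0 < v := hq.factorization_pos_of_dvd hpm1 hdvd
  refine ⟨?_, horder⟩
  intro h
  rw [h, orderOf_one] at horder
  have : 1 < q ^ v := Nat.one_lt_pow (by omega : v ≠ 0) hq1
  omega
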